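/- For every integer d ≥ 2 and every integer w with 1 ≤ w ≤ d − 1, let p = 1 − 1/d. Then ln(1/(1 − 2p^d + 2p^{2d−w})) / ln(1/(1 − (1/(d−1))p^d)) ≥ d − w. -/

import Mathlib

/-- Bernoulli-derived bound: `(1-1/D)^m * (D-1+m) ≤ D-1` for `D ≥ 2`. -/
lemma aux_pow_bound (D : ℝ) (hD : 2 ≤ D) (m : ℕ) :
    (1 - 1/D) ^ m * (D - 1 + m) ≤ D - 1 := by
  have hD0 : (0:ℝ) < D := by linarith
  have hD1 : (0:ℝ) < D - 1 := by linarith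
  set p : ℝ := 1 - 1/D with hpdef
  have hp0 : 0 < p := by
    have : 1/D ≤ 1/2 := by
      apply div_le_div_of_nonneg_left <;> linarith
    simp only [hpdef]; linarith
  have h1 : 1 + (m:ℝ) * (1/(D-1)) ≤ (1 + 1/(D-1)) ^ m := by
    apply one_add_mul_le_pow
    have : (0:ℝ) < 1/(D-1) := by positivity
    linarith
  have h2 : (1 + 1/(D-1)) = 1/p := by
    rw [hpdef]
    field_simp
    ring
  have h3 : p ^ m * (1/p) ^ m = 1 := by
    rw [← mul_pow]
    field_simp
    exact one_pow m
  have h4 : p ^ m * (1 + (m:ℝ) * (1/(D-1))) ≤ 1 := by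
    calc p ^ m * (1 + (m:ℝ) * (1/(D-1))) ≤ p ^ m * (1 + 1/(D-1)) ^ m := by
          apply mul_le_mul_of_nonneg_left h1 (by positivity)
      _ = p ^ m * (1/p) ^ m := by rw [h2]
      _ = 1 := h3
  have h5 : (D - 1) * (1 + (m:ℝ) * (1/(D-1))) = D - 1 + m := by
    field_simp
  calc p ^ m * (D - 1 + m) = (D - 1) * (p ^ m * (1 + (m:ℝ) * (1/(D-1)))) := by
        rw [← h5]; ring
    _ ≤ (D - 1) * 1 := mul_le_mul_of_nonneg_left h4 (by linarith)
    _ = D - 1 := by ring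

theorem stmt_8 (d w : ℕ) (hd : 2 ≤ d) (hw1 : 1 ≤ w) (hw2 : w ≤ d - 1) :
    ((d : ℝ) - w) ≤
      Real.log (1 / (1 - 2 * (1 - 1 / (d : ℝ)) ^ d + 2 * (1 - 1 / (d : ℝ)) ^ (2 * d - w))) /
      Real.log (1 / (1 - (1 / ((d : ℝ) - 1)) * (1 - 1 / (d : ℝ)) ^ d)) := by
  have hD : (2:ℝ) ≤ (d:ℝ) := by exact_mod_cast hd
  set D : ℝ := (d:ℝ) with hDdef
  have hD0 : (0:ℝ) < D := by linarith
  have hD1 : (1:ℝ) ≤ D - 1 := by linarith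
  have hD1' : (0:ℝ) < D - 1 := by linarith
  set p : ℝ := 1 - 1/D with hpdef
  have hp0 : 0 < p := by
    have : 1/D ≤ 1/2 := by
      apply div_le_div_of_nonneg_left <;> linarith
    simp only [hpdef]; linarith
  have hp1 : p < 1 := by
    have : 0 < 1/D := by positivity
    simp only [hpdef]; linarith
  clear_value D p
  set k : ℕ := d - w with hkdef
  clear_value k
  have hk1 : 1 ≤ k := by omega
  have hkd : 2 * d - w = d + k := by omega
  have hkD : (k:ℝ) ≤ D - 1 := by
    have hk' : k ≤ d - 1 := by omega
    have h : (k:ℝ) ≤ ((d-1 : ℕ):ℝ) := by exact_mod_cast hk'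
    have h2 : ((d-1:ℕ):ℝ) = D - 1 := by
      rw [hDdef]; push_cast [Nat.cast_sub (by omega : 1 ≤ d)]; ring
    linarith [h2 ▸ h]
  have hcast : (D : ℝ) - w = (k:ℝ) := by
    rw [hkdef, hDdef]
    push_cast [Nat.cast_sub (by omega : w ≤ d)]
    ring
  rw [hkd, hcast]
  set A : ℝ := 1 - 2 * p ^ d + 2 * p ^ (d + k) with hAdef
  set c : ℝ := (1 / (D - 1)) * p ^ d with hcdef
  set B : ℝ := 1 - c with hBdef
  clear_value A c B
  have hpd0 : 0 < p ^ d := by positivity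
  have hpd1 : p ^ d < 1 := pow_lt_one₀ hp0.le hp1 (by omega)
  have hc0 : 0 < c := by rw [hcdef]; positivity
  have hc1 : c < 1 := by
    rw [hcdef, div_mul_eq_mul_div, one_mul, div_lt_one hD1']
    linarith
  have hB0 : 0 < B := by rw [hBdef]; linarith
  have hB1 : B < 1 := by rw [hBdef]; linarith
  -- bound on p^d : p^d * (2D - 1) ≤ D - 1
  have hpdb : p ^ d * (D - 1 + D) ≤ D - 1 := by
    have h := aux_pow_bound D hD d
    rw [← hpdef, ← hDdef] at h
    exact h
  have hpdhalf : p ^ d ≤ 1/2 := by nlinarith [hpdb, hpd0]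
  -- bound on p^k
  have hpkb : p ^ k * (D - 1 + k) ≤ D - 1 := by
    have h := aux_pow_bound D hD k
    rw [← hpdef] at h
    exact h
  have hpk1 : p ^ k < 1 := pow_lt_one₀ hp0.le hp1 (by omega)
  have hpk0 : 0 < p ^ k := by positivity
  have hA0 : 0 < A := by
    have hpp : 0 < p ^ (d + k) := by positivity
    rw [hAdef]
    linarith
  have hA1 : A < 1 := by
    have : p ^ (d + k) < p ^ d := by
      rw [pow_add]
      nlinarith
    rw [hAdef]; linarith
  -- key inequality
  have hkey : (k:ℝ) ≤ 2 * (D - 1) * (1 - p ^ k) := by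
    nlinarith [mul_nonneg (by linarith : (0:ℝ) ≤ (D - 1) - (k:ℝ))
      (by linarith : (0:ℝ) ≤ 1 - p ^ k), hpkb]
  -- main: A ≤ B ^ k
  have hmain : A ≤ B ^ k := by
    have hbern : 1 - (k:ℝ) * c ≤ B ^ k := by
      have h := one_add_mul_le_pow (a := -c) (by linarith) k
      rw [hBdef]
      calc 1 - (k:ℝ) * c = 1 + (k:ℝ) * (-c) := by ring
        _ ≤ (1 + -c) ^ k := h
        _ = (1 - c) ^ k := by ring_nf
    have hstep : A ≤ 1 - (k:ℝ) * c := by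
      have h : (k:ℝ) * p ^ d ≤ 2 * (D - 1) * (1 - p ^ k) * p ^ d :=
        mul_le_mul_of_nonneg_right hkey hpd0.le
      have h2 : (k:ℝ) * p ^ d / (D - 1) ≤ 2 * (1 - p ^ k) * p ^ d := by
        rw [div_le_iff₀ hD1']
        calc (k:ℝ) * p ^ d ≤ 2 * (D - 1) * (1 - p ^ k) * p ^ d := h
          _ = 2 * (1 - p ^ k) * p ^ d * (D - 1) := by ring
      have h3 : (k:ℝ) * c = (k:ℝ) * p ^ d / (D - 1) := by
        rw [hcdef]; ring
      have h4 : A = 1 - 2 * p ^ d * (1 - p ^ k) := by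
        rw [hAdef, pow_add]; ring
      rw [h4, h3]
      linarith
    exact hstep.trans hbern
  have hlogA : Real.log A ≤ (k:ℝ) * Real.log B := by
    calc Real.log A ≤ Real.log (B ^ k) := Real.log_le_log hA0 hmain
      _ = (k:ℝ) * Real.log B := by rw [Real.log_pow]
  have hlB : Real.log B < 0 := Real.log_neg hB0 hB1
  rw [one_div A, one_div B, Real.log_inv, Real.log_inv]
  rw [neg_div_neg_eq, le_div_iff_of_neg hlB]
  linarith
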